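/- Reduction of optimal TL path planning with relaxation to shortest path in the implicit product: let T = (X, x₀, δ_T, AP, ℓ, w_T) be a weighted transition system, A_φ a specification DFA over Σ = AP, E a WFSE over Σ_E all of whose transition symbols have non-ε first component, λ ≥ 0, and A the relaxed specification automaton. Define the weighted product search graph P on X × (Z × S) with an edge from (x, (z,s)) to (x', (z',s')) of cost w_T(x,x') + λ·w_E(z, z') whenever (x, x') ∈ δ_T and (z', s') is the transition of A from (z, s) on some symbol (ℓ(x'), σ') ∈ Σ_E. Then the minimum total cost over paths in P from (x₀, (z₀, s₀)) to a vertex whose automaton component lies in F_E × F_φ equals the minimum, over trajectories x = x₀ x₁ … x_n of T and words w = w₁ … w_n over Σ_E such that the k-th symbol w_k has first component ℓ(x_k), E accepts w, and A_φ accepts the output projection π₂(w), of w_T(x) + λ·(total E-weight of the accepting run of E on w), where w_T(x) = Σ_k w_T(x_{k-1}, x_k). -/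

import Mathlib

/-- Run a deterministic automaton with transition function `δ` from state `s` on the word `w`. -/
def runDFA {S α : Type*} (δ : S → α → S) (s : S) (w : List α) : S :=
  w.foldl δ s

/-- One step of the relaxed specification automaton: on a symbol `(σ, some σ')` the state `(z, s)`
steps to `(δE z (σ, some σ'), δφ s σ')`; on `(σ, none)` it steps to `(δE z (σ, none), s)`. -/
def relStep {α Z S : Type*} (δE : Z → Option α × Option α → Z) (δφ : S → α → S)
    (q : Z × S) (a : Option α × Option α) : Z × S :=
  match a.2 with
  | some b => (δE q.1 a, δφ q.2 b)
  | none => (δE q.1 a, q.2)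

lemma relStep_fst {α Z S : Type*} (δE : Z → Option α × Option α → Z) (δφ : S → α → S)
    (q : Z × S) (a : Option α × Option α) :
    (relStep δE δφ q a).1 = δE q.1 a := by
  rcases a with ⟨a1, a2⟩; cases a2 <;> rfl

lemma foldl_relStep_snd {α Z S : Type*} (δE : Z → Option α × Option α → Z) (δφ : S → α → S)
    (L : List (Option α × Option α)) (q : Z × S) :
    (L.foldl (relStep δE δφ) q).2 = runDFA δφ q.2 (L.filterMap Prod.snd) := by
  induction L generalizing q with
  | nil => rfl
  | cons a L ih =>
    rcases a with ⟨a1, a2⟩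
    cases a2 <;> simp [relStep, runDFA, List.filterMap_cons, ih]

theorem planning_reduction_to_shortest_path
    {X α Z S : Type*} [Fintype X] [Fintype α] [Fintype Z] [Fintype S]
    (δT : X → X → Prop) (x₀ : X) (ℓ : X → α)
    (wT : X → X → ℝ) (hwT : ∀ u v, δT u v → 0 ≤ wT u v)
    (δE : Z → Option α × Option α → Z) (z₀ : Z) (FE : Set Z)
    (enab : Z → Option α × Option α → Prop)
    (hε : ∀ z a, enab z a → a.1 ≠ (none : Option α))
    (wE : Z → Z → ℝ) (hwE : ∀ z z', 0 ≤ wE z z')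
    (δφ : S → α → S) (s₀ : S) (Fφ : Set S)
    (lam : ℝ) (hlam : 0 ≤ lam)
    (EP : X × (Z × S) → X × (Z × S) → Prop)
    (hEP : ∀ v v', EP v v' ↔ δT v.1 v'.1 ∧ ∃ σ' : Option α,
        enab v.2.1 ((some (ℓ v'.1) : Option α), σ') ∧
        v'.2 = relStep δE δφ v.2 ((some (ℓ v'.1) : Option α), σ')) :
    sInf {c : ℝ | ∃ (n : ℕ) (p : ℕ → X × (Z × S)),
        p 0 = (x₀, (z₀, s₀)) ∧
        (∀ k < n, EP (p k) (p (k+1))) ∧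
        ((p n).2.1 ∈ FE ∧ (p n).2.2 ∈ Fφ) ∧
        c = ∑ k ∈ Finset.range n,
          (wT (p k).1 (p (k+1)).1 + lam * wE (p k).2.1 (p (k+1)).2.1)} =
    sInf {c : ℝ | ∃ (n : ℕ) (x : ℕ → X) (w : ℕ → Option α × Option α) (z : ℕ → Z),
        x 0 = x₀ ∧
        (∀ k < n, δT (x k) (x (k+1))) ∧
        (∀ k < n, (w k).1 = (some (ℓ (x (k+1))) : Option α)) ∧
        z 0 = z₀ ∧
        (∀ k < n, enab (z k) (w k) ∧ z (k+1) = δE (z k) (w k)) ∧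
        z n ∈ FE ∧
        runDFA δφ s₀ ((List.range n).filterMap (fun k => (w k).2)) ∈ Fφ ∧
        c = (∑ k ∈ Finset.range n, wT (x k) (x (k+1))) +
            lam * ∑ k ∈ Finset.range n, wE (z k) (z (k+1))} := by
  congr 1
  ext c
  simp only [Set.mem_setOf_eq]
  constructor
  · rintro ⟨n, p, hp0, hstep, ⟨hFE, hFφ⟩, hc⟩
    have H : ∀ k, k < n → ∃ σ' : Option α,
        enab (p k).2.1 ((some (ℓ ((p (k+1)).1)) : Option α), σ') ∧
        (p (k+1)).2 = relStep δE δφ (p k).2 ((some (ℓ ((p (k+1)).1)) : Option α), σ') :=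
      fun k h => ((hEP _ _).1 (hstep k h)).2
    set w : ℕ → Option α × Option α := fun k =>
      if h : k < n then ((some (ℓ ((p (k+1)).1)) : Option α), Classical.choose (H k h))
      else ((some (ℓ x₀) : Option α), none) with hw
    have hwk : ∀ k (h : k < n),
        w k = ((some (ℓ ((p (k+1)).1)) : Option α), Classical.choose (H k h)) := by
      intro k h; simp [hw, h]
    have henab : ∀ k (h : k < n), enab (p k).2.1 (w k) := by
      intro k h; rw [hwk k h]; exact (Classical.choose_spec (H k h)).1
    have hrec : ∀ k (h : k < n), (p (k+1)).2 = relStep δE δφ (p k).2 (w k) := by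
      intro k h; rw [hwk k h]; exact (Classical.choose_spec (H k h)).2
    have hq : ∀ k, k ≤ n →
        (p k).2 = ((List.range k).map w).foldl (relStep δE δφ) (z₀, s₀) := by
      intro k
      induction k with
      | zero => intro _; simp [hp0]
      | succ k ih =>
        intro hk
        have hk' : k < n := hk
        rw [List.range_succ, List.map_append, List.foldl_append]
        simp only [List.map_cons, List.map_nil, List.foldl_cons, List.foldl_nil]
        rw [← ih hk'.le, hrec k hk']
    refine ⟨n, fun k => (p k).1, w, fun k => (p k).2.1, ?_, ?_, ?_, ?_, ?_, hFE, ?_, ?_⟩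
    · show (p 0).1 = x₀; rw [hp0]
    · exact fun k h => ((hEP _ _).1 (hstep k h)).1
    · intro k h; rw [hwk k h]
    · show (p 0).2.1 = z₀; rw [hp0]
    · intro k h
      refine ⟨henab k h, ?_⟩
      have := congrArg Prod.fst (hrec k h)
      rwa [relStep_fst] at this
    · have h2 : (p n).2.2 = runDFA δφ s₀ ((List.range n).filterMap (fun k => (w k).2)) := by
        rw [hq n le_rfl, foldl_relStep_snd, List.filterMap_map]; rfl
      rw [← h2]; exact hFφ
    · rw [hc, Finset.sum_add_distrib, ← Finset.mul_sum]
  · rintro ⟨n, x, w, z, hx0, hδT, hw1, hz0, hzrec, hFE, hFφ, hc⟩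
    set p : ℕ → X × (Z × S) := fun k =>
      (x k, ((List.range k).map w).foldl (relStep δE δφ) (z₀, s₀)) with hp
    have hpsucc : ∀ k, (p (k+1)).2 = relStep δE δφ (p k).2 (w k) := by
      intro k
      simp only [hp, List.range_succ, List.map_append, List.foldl_append, List.map_cons,
        List.map_nil, List.foldl_cons, List.foldl_nil]
    have hq1 : ∀ k, k ≤ n → (p k).2.1 = z k := by
      intro k
      induction k with
      | zero => intro _; simp [hp, hz0]
      | succ k ih =>
        intro hk
        have hk' : k < n := hk
        rw [hpsucc k]
        rw [relStep_fst, ih hk'.le, (hzrec k hk').2]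
    have hwkeq : ∀ k, k < n → w k = ((some (ℓ (x (k+1))) : Option α), (w k).2) := by
      intro k h
      exact Prod.ext (hw1 k h) rfl
    refine ⟨n, p, by simp [hp, hx0], ?_, ⟨by rw [hq1 n le_rfl]; exact hFE, ?_⟩, ?_⟩
    · intro k h
      refine (hEP _ _).2 ⟨hδT k h, (w k).2, ?_, ?_⟩
      · rw [hq1 k h.le, ← hwkeq k h]
        exact (hzrec k h).1
      · rw [hpsucc k, ← hwkeq k h]
    · have : (p n).2.2 = runDFA δφ s₀ ((List.range n).filterMap (fun k => (w k).2)) := by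
        simp only [hp]
        rw [foldl_relStep_snd, List.filterMap_map]
        rfl
      rw [this]; exact hFφ
    · rw [hc, Finset.sum_add_distrib, ← Finset.mul_sum]
      congr 1
      congr 1
      refine Finset.sum_congr rfl ?_
      intro k hk
      rw [Finset.mem_range] at hk
      rw [hq1 k hk.le, hq1 (k+1) hk]
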